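/- arXiv:1402.5361 — 4 statements merged into one kernel-verified Lean document; each statement's English description precedes it below -/
import Mathlib

section
/- For every finite O-sequence h = (1, h_1, …, h_{s-1}) of multiplicity d ≥ 2, the sequence obtained from h by decreasing its last entry h_{s-1} by 1 (deleting this entry if h_{s-1} = 1) is again a finite O-sequence, of multiplicity d-1. Consequently, every finite O-sequence of multiplicity d can be obtained from the length-one O-sequence (1) by a chain of d-1 steps, each step increasing a single entry by 1 (possibly appending a new final entry equal to 1) and producing a finite O-sequence. -/
/-- The Macaulay bound `a^⟨t⟩`: if `a = C(k_t,t) + C(k_{t-1},t-1) + ⋯ + C(k_j,j)` is the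
binomial expansion of `a` in base `t`, then `a^⟨t⟩ = C(k_t+1,t+1) + ⋯ + C(k_j+1,j+1)`.
Computed greedily; `mac t a = a^⟨t⟩` for `t ≥ 1`. -/
def mac : ℕ → ℕ → ℕ
  | 0, _ => 0
  | t+1, a =>
    if a = 0 then 0
    else
      Nat.choose (Nat.findGreatest (fun n => Nat.choose n (t+1) ≤ a) (a + t + 1) + 1) (t+2) +
        mac t (a - Nat.choose (Nat.findGreatest (fun n => Nat.choose n (t+1) ≤ a) (a + t + 1)) (t+1))

/-- `h : ℕ → ℕ` is a finite O-sequence of length `s`: `h 0 = 1`, the entries `h 0, …, h (s-1)`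
are positive, entries from index `s` on are zero, and `h (t+1) ≤ (h t)^⟨t⟩` for all `t ≥ 1`. -/
def IsOSeq (h : ℕ → ℕ) (s : ℕ) : Prop :=
  h 0 = 1 ∧ (∀ i, 0 < h i ↔ i < s) ∧ ∀ t, 1 ≤ t → h (t + 1) ≤ mac t (h t)

/-- The multiplicity `e(h) = h_0 + ⋯ + h_{s-1}` of a finite O-sequence of length `s`. -/
def mult (h : ℕ → ℕ) (s : ℕ) : ℕ := ∑ i ∈ Finset.range s, h i

/-- The genus `g(h) = Σ_{j=2}^{s-1} (j-1)·h_j` of a finite O-sequence of length `s`. -/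
def genus (h : ℕ → ℕ) (s : ℕ) : ℕ := ∑ j ∈ Finset.range s, (j - 1) * h j

/-- The sequence obtained from `h` by increasing the `i`-th entry by `1`, i.e. `h + e_i`. -/
def addE (h : ℕ → ℕ) (i : ℕ) : ℕ → ℕ := fun j => if j = i then h j + 1 else h j

/-- The sequence obtained from `h` by decreasing the `i`-th entry by `1`, i.e. `h - e_i`. -/
def subE (h : ℕ → ℕ) (i : ℕ) : ℕ → ℕ := fun j => if j = i then h j - 1 else h j

/-- The total order on finite O-sequences of the same length: `oLT h k` iff `h_ℓ < k_ℓ`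
where `ℓ = max{ j : h_j ≠ k_j }`. -/
def oLT (h k : ℕ → ℕ) : Prop := ∃ ℓ, h ℓ < k ℓ ∧ ∀ j, ℓ < j → h j = k j

/-- The set of genera of finite O-sequences of multiplicity `d` and length `s`. -/
def genusSet (d s : ℕ) : Set ℕ := {g | ∃ h, IsOSeq h s ∧ mult h s = d ∧ genus h s = g}

/-- `G_d`: the set of genera of finite O-sequences of multiplicity `d` (of any length). -/
def GSet (d : ℕ) : Set ℕ := {g | ∃ h s, IsOSeq h s ∧ mult h s = d ∧ genus h s = g}

/-- `g` is a gap in `R_d = [0, C(d-1,2)]`: it lies in the range but is not the genus of any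
finite O-sequence of multiplicity `d`. -/
def IsGap (d g : ℕ) : Prop :=
  g ≤ Nat.choose (d - 1) 2 ∧ ∀ h s, IsOSeq h s → mult h s = d → genus h s ≠ g

/-- The O-sequence `(1, d-s+1, 1^{s-2})`, minimal in `𝒢_d^s`. -/
def minSeq (d s : ℕ) : ℕ → ℕ :=
  fun j => if j = 0 then 1 else if j = 1 then d - s + 1 else if j < s then 1 else 0

/-- The O-sequence `(1, 2^{d-s}, 1^{2s-d-1})`, maximal in `𝒢_d^s`. -/
def maxSeq (d s : ℕ) : ℕ → ℕ :=
  fun j => if j = 0 then 1 else if j ≤ d - s then 2 else if j < s then 1 else 0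

/-- The O-sequence `(1, d-1)`. -/
def twoSeq (d : ℕ) : ℕ → ℕ := fun j => if j = 0 then 1 else if j = 1 then d - 1 else 0

/-- The operation `h ↦ h - e_{s-1} + e_1` on a sequence of length `s`. -/
def downUp (h : ℕ → ℕ) (s : ℕ) : ℕ → ℕ :=
  fun j => if j = s - 1 then h j - 1 else if j = 1 then h j + 1 else h j

/-- The largest index `1 ≤ j ≤ s-1` with `h j > 1` (and `0` if there is none). -/
def topIdx (h : ℕ → ℕ) (s : ℕ) : ℕ := Nat.findGreatest (fun j => 1 < h j) (s - 1)

/-- The operation `h ↦ h - e_i + e_1` where `i = topIdx h s`. -/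
def shiftDown (h : ℕ → ℕ) (s : ℕ) : ℕ → ℕ :=
  fun j => if j = topIdx h s then h j - 1 else if j = 1 then h j + 1 else h j

/-- Auxiliary list `[m_n, m_{n-1}, …, m_1]` for the recursively defined sequence `(m_d)`. -/
def mListAux : ℕ → List ℕ
  | 0 => []
  | n+1 =>
    let prev := mListAux n
    let newVal :=
      if n = 0 then 0
      else
        (List.range' 2 (n - 1)).foldl
          (fun M k =>
            if Nat.choose k 2 - 1 ≤ M then max M (prev.getD (k - 1) 0 + Nat.choose k 2) else M)
          (prev.getD 0 0)
    newVal :: prev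

/-- The sequence `(m_d)_{d ≥ 1}`: `m_1 = 0` and, for `d ≥ 2`, `m_d` is obtained from
`M := m_{d-1}` by running over `k = 2, …, d-1` and replacing `M` by
`max M (m_{d-k} + C(k,2))` whenever `C(k,2) - 1 ≤ M`. -/
def mSeq (d : ℕ) : ℕ := (mListAux d).getD 0 0

lemma oseq_s_pos (h : ℕ → ℕ) (s : ℕ) (hO : IsOSeq h s) : 0 < s := by
  have := (hO.2.1 0).mp (by rw [hO.1]; norm_num)
  omega

lemma oseq_s_ge_two (h : ℕ → ℕ) (s d : ℕ) (hO : IsOSeq h s) (he : mult h s = d)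
    (hd : 2 ≤ d) : 2 ≤ s := by
  have h1 := oseq_s_pos h s hO
  by_contra hs
  have : s = 1 := by omega
  subst this
  simp [mult, hO.1] at he
  omega

lemma stmt0_part1 (h : ℕ → ℕ) (s d : ℕ) (hO : IsOSeq h s) (he : mult h s = d) (hd : 2 ≤ d) :
    IsOSeq (subE h (s - 1)) (if h (s - 1) = 1 then s - 1 else s) ∧
      mult (subE h (s - 1)) (if h (s - 1) = 1 then s - 1 else s) = d - 1 := by
  have hs2 : 2 ≤ s := oseq_s_ge_two h s d hO he hd
  obtain ⟨t, rfl⟩ : ∃ t, s = t + 1 := ⟨s - 1, by omega⟩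
  rw [Nat.add_sub_cancel] at *
  obtain ⟨h0, hpos, hmac⟩ := hO
  have hlast : 1 ≤ h t := (hpos _).mpr (by omega)
  have hzero : ∀ i, t + 1 ≤ i → h i = 0 := by
    intro i hi
    have := hpos i
    omega
  have hsplit : mult h t + h t = d := by
    have : mult h (t + 1) = mult h t + h t := Finset.sum_range_succ h t
    omega
  have hsum1 : mult (subE h t) t = mult h t := by
    unfold mult
    apply Finset.sum_congr rfl
    intro j hj
    simp only [Finset.mem_range] at hj
    simp [subE, show j ≠ t by omega]
  have hOmac : ∀ u, 1 ≤ u → subE h t (u + 1) ≤ mac u (subE h t u) := by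
    intro u hu
    by_cases h1 : u = t
    · have : subE h t (u + 1) = 0 := by
        simp [subE, show u + 1 ≠ t by omega, hzero (u + 1) (by omega)]
      simp [this]
    · have hu' : subE h t u = h u := by simp [subE, h1]
      rw [hu']
      by_cases h2 : u + 1 = t
      · have : subE h t (u + 1) = h (u + 1) - 1 := by simp [subE, h2]
        rw [this]
        exact le_trans (Nat.sub_le _ _) (hmac u hu)
      · have : subE h t (u + 1) = h (u + 1) := by simp [subE, h2]
        rw [this]
        exact hmac u hu
  have hO0 : subE h t 0 = 1 := by simp [subE, show (0:ℕ) ≠ t by omega, h0]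
  by_cases hc : h t = 1
  · rw [if_pos hc]
    refine ⟨⟨hO0, ?_, hOmac⟩, ?_⟩
    · intro i
      by_cases hi : i = t
      · subst hi; simp [subE, hc]
      · simp only [subE, if_neg hi]
        have := hpos i
        omega
    · rw [hsum1]; omega
  · rw [if_neg hc]
    have hsum2 : mult (subE h t) (t + 1) = d - 1 := by
      have : mult (subE h t) (t + 1) = mult (subE h t) t + subE h t t :=
        Finset.sum_range_succ _ t
      rw [this, hsum1]
      have hst : subE h t t = h t - 1 := by simp [subE]
      omega
    refine ⟨⟨hO0, ?_, hOmac⟩, hsum2⟩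
    intro i
    by_cases hi : i = t
    · subst hi
      have hst : subE h i i = h i - 1 := by simp [subE]
      rw [hst]
      omega
    · simp only [subE, if_neg hi]
      exact hpos i

lemma stmt0_chain : ∀ d, 1 ≤ d → ∀ h s, IsOSeq h s → mult h s = d →
    (∃ (c : ℕ → ℕ → ℕ) (σ : ℕ → ℕ),
      (∀ j, c 0 j = if j = 0 then 1 else 0) ∧
      c (d - 1) = h ∧
      (∀ m, m ≤ d - 1 → IsOSeq (c m) (σ m)) ∧
      (∀ m, m < d - 1 → ∃ i, c (m + 1) i = c m i + 1 ∧ ∀ j, j ≠ i → c (m + 1) j = c m j)) := by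
  intro d
  induction d with
  | zero => omega
  | succ n ih =>
    intro _ h s hO he
    by_cases hn : n = 0
    · subst hn
      have hs1 : s = 1 := by
        have h1 := oseq_s_pos h s hO
        by_contra hs
        have hs2 : 2 ≤ s := by omega
        have hsub : ∑ i ∈ Finset.range 2, h i ≤ ∑ i ∈ Finset.range s, h i :=
          Finset.sum_le_sum_of_subset (Finset.range_subset_range.mpr hs2)
        have h1' := (hO.2.1 1).mpr (by omega)
        simp [Finset.sum_range_succ, hO.1] at hsub
        unfold mult at he
        omega
      refine ⟨fun _ => h, fun _ => s, ?_, rfl, fun m _ => hO, by omega⟩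
      intro j
      by_cases hj : j = 0
      · subst hj; simp [hO.1]
      · have := hO.2.1 j
        simp only [if_neg hj]
        omega
    · have hd2 : 2 ≤ n + 1 := by omega
      obtain ⟨hO', he'⟩ := stmt0_part1 h s (n + 1) hO he hd2
      obtain ⟨c, σ, hc0, hcn, hcO, hcstep⟩ :=
        ih (by omega) (subE h (s - 1)) (if h (s - 1) = 1 then s - 1 else s) hO' (by omega)
      have hs1 : 1 ≤ s := oseq_s_pos h s hO
      refine ⟨fun m => if m = n then h else c m, fun m => if m = n then s else σ m,
        ?_, by simp, ?_, ?_⟩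
      · intro j
        dsimp only
        rw [if_neg (by omega : ¬ (0:ℕ) = n)]
        exact hc0 j
      · intro m hm
        dsimp only
        by_cases hmn : m = n
        · simp [hmn, hO]
        · rw [if_neg hmn, if_neg hmn]
          exact hcO m (by omega)
      · intro m hm
        dsimp only
        by_cases hmn : m + 1 = n
        · rw [if_neg (by omega : ¬ m = n), if_pos hmn, show m = n - 1 by omega, hcn]
          refine ⟨s - 1, ?_, ?_⟩
          · have hlast : 1 ≤ h (s - 1) := (hO.2.1 _).mpr (by omega)
            have hst : subE h (s - 1) (s - 1) = h (s - 1) - 1 := by simp [subE]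
            rw [hst]
            omega
          · intro j hj
            simp [subE, hj]
        · rw [if_neg (by omega : ¬ m = n), if_neg hmn]
          exact hcstep m (by omega)


/-- For every finite O-sequence `h` of multiplicity `d ≥ 2`, decreasing its
last entry by `1` (the entry disappears when it equals `1`) yields a finite O-sequence of
multiplicity `d - 1`. Consequently, every finite O-sequence of multiplicity `d` is obtained
from the length-one O-sequence `(1)` by a chain of `d - 1` steps, each increasing a single
entry by `1` and producing a finite O-sequence. -/
theorem stmt0 (h : ℕ → ℕ) (s d : ℕ) (hO : IsOSeq h s) (he : mult h s = d) (hd : 2 ≤ d) :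
    (IsOSeq (subE h (s - 1)) (if h (s - 1) = 1 then s - 1 else s) ∧
      mult (subE h (s - 1)) (if h (s - 1) = 1 then s - 1 else s) = d - 1) ∧
    (∃ (c : ℕ → ℕ → ℕ) (σ : ℕ → ℕ),
      (∀ j, c 0 j = if j = 0 then 1 else 0) ∧
      c (d - 1) = h ∧
      (∀ m, m ≤ d - 1 → IsOSeq (c m) (σ m)) ∧
      (∀ m, m < d - 1 → ∃ i, c (m + 1) i = c m i + 1 ∧ ∀ j, j ≠ i → c (m + 1) j = c m j)) := by
  exact ⟨stmt0_part1 h s d hO he hd, stmt0_chain d (by omega) h s hO he⟩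
end

section
/- Let h = (1, h_1, …, h_{s-1}) be a finite O-sequence of length s different from the all-ones sequence (1^s), and let k = max{1 ≤ i ≤ s-1 : h_i > 1}. Then the sequence h - e_k obtained by decreasing the k-th entry of h by 1 is a finite O-sequence of length s and multiplicity e(h) - 1. Consequently, every finite O-sequence of length s and multiplicity d can be obtained from (1^s) by d - s steps, each increasing a single entry by 1, with all intermediate sequences being finite O-sequences of length s. -/
lemma mac_pos {t a : ℕ} (ht : 1 ≤ t) (ha : 1 ≤ a) : 1 ≤ mac t a := by
  obtain ⟨u, rfl⟩ : ∃ u, t = u + 1 := ⟨t - 1, by omega⟩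
  rw [mac, if_neg (by omega)]
  have hN : u + 1 ≤ Nat.findGreatest (fun n => Nat.choose n (u + 1) ≤ a) (a + u + 1) :=
    Nat.le_findGreatest (by omega) (by simpa [Nat.choose_self] using ha)
  have := Nat.choose_pos (k := u + 2)
    (n := Nat.findGreatest (fun n => Nat.choose n (u + 1) ≤ a) (a + u + 1) + 1) (by omega)
  omega

lemma key_subE (h : ℕ → ℕ) (s k : ℕ) (hO : IsOSeq h s) (hk1 : 1 ≤ k) (hk2 : k ≤ s - 1)
    (hk3 : 1 < h k) (hkmax : ∀ i, 1 ≤ i → i ≤ s - 1 → 1 < h i → i ≤ k) :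
    IsOSeq (subE h k) s := by
  obtain ⟨h0, hpos, hmac⟩ := hO
  have hs : 1 ≤ s := by have := (hpos 0).mp (by omega); omega
  have htop : ∀ i, k < i → h i ≤ 1 := by
    intro i hki
    by_contra hgt
    push_neg at hgt
    have hilt : i < s := (hpos i).mp (by omega)
    have hle : i ≤ k := hkmax i (by omega) (by omega) hgt
    omega
  refine ⟨?_, ?_, ?_⟩
  · simp only [subE]; rw [if_neg (by omega)]; exact h0
  · intro i
    simp only [subE]
    split
    · next heq => subst heq; constructor <;> intro <;> omega
    · exact hpos i
  · intro t ht
    simp only [subE]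
    rcases eq_or_ne t k with rfl | htk
    · rw [if_neg (by omega), if_pos rfl]
      have h1 : h (t + 1) ≤ 1 := htop _ (by omega)
      have h2 : 1 ≤ mac t (h t - 1) := mac_pos ht (by omega)
      omega
    · rw [if_neg htk]
      split
      · exact le_trans (Nat.sub_le _ _) (hmac t ht)
      · exact hmac t ht

lemma mult_subE (h : ℕ → ℕ) (s k : ℕ) (hk : k < s) (hpos : 1 ≤ h k) :
    mult h s = mult (subE h k) s + 1 := by
  unfold mult
  have hcong : ∀ i ∈ Finset.range s, h i = subE h k i + (if i = k then 1 else 0) := by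
    intro i _
    by_cases hik : i = k
    · subst hik
      have h1 : subE h i i = h i - 1 := by simp [subE]
      rw [h1, if_pos rfl]
      omega
    · simp only [subE, if_neg hik]
      omega
  rw [Finset.sum_congr rfl hcong, Finset.sum_add_distrib,
    Finset.sum_ite_eq' (Finset.range s) k (fun _ => 1), if_pos (Finset.mem_range.mpr hk)]

lemma s_le_mult (h : ℕ → ℕ) (s : ℕ) (hO : IsOSeq h s) : s ≤ mult h s := by
  obtain ⟨_, hpos, _⟩ := hO
  calc s = ∑ _i ∈ Finset.range s, 1 := by simp
  _ ≤ ∑ i ∈ Finset.range s, h i :=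
    Finset.sum_le_sum (fun i hi => (hpos i).mpr (Finset.mem_range.mp hi))

/-- Helper: extend a chain by one final step. -/
def stepc (c' : ℕ → ℕ → ℕ) (h : ℕ → ℕ) (N : ℕ) : ℕ → ℕ → ℕ :=
  fun m j => if m = N then h j else c' m j

lemma chain (d : ℕ) : ∀ h s, IsOSeq h s → mult h s = d →
    ∃ c : ℕ → ℕ → ℕ,
      (∀ j, c 0 j = if j < s then 1 else 0) ∧
      c (d - s) = h ∧
      (∀ m, m ≤ d - s → IsOSeq (c m) s) ∧
      (∀ m, m < d - s → ∃ i, c (m + 1) i = c m i + 1 ∧ ∀ j, j ≠ i → c (m + 1) j = c m j) := by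
  induction d using Nat.strong_induction_on with
  | _ d IH =>
  intro h s hO he
  have hs1 : 0 < s := (hO.2.1 0).mp (by rw [hO.1]; omega)
  have hsle : s ≤ d := he ▸ s_le_mult h s hO
  obtain ⟨h0, hpos, hmac⟩ := id hO
  rcases eq_or_lt_of_le hsle with heq | hlt
  · -- d = s : h is the all-ones sequence
    have hle : ∀ i, 1 ≤ i → i ≤ s - 1 → h i ≤ 1 := by
      by_contra hc
      push_neg at hc
      obtain ⟨i, hi1, hi2, hi3⟩ := hc
      have hlt' : s < mult h s := by
        unfold mult
        calc s = ∑ _j ∈ Finset.range s, 1 := by simp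
        _ < ∑ j ∈ Finset.range s, h j :=
          Finset.sum_lt_sum (fun j hj => (hpos j).mpr (Finset.mem_range.mp hj))
            ⟨i, Finset.mem_range.mpr (by omega), by omega⟩
      omega
    have hone : ∀ j, h j = if j < s then 1 else 0 := by
      intro j
      split
      · next hj =>
        rcases Nat.eq_zero_or_pos j with rfl | hj1
        · exact h0
        · have := hle j hj1 (by omega)
          have := (hpos j).mpr hj
          omega
      · next hj =>
        have hj0 : ¬ 0 < h j := fun hp => hj ((hpos j).mp hp)
        omega
    refine ⟨fun _ => h, hone, rfl, fun _ _ => hO, fun m hm => absurd hm (by omega)⟩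
  · -- s < d
    have hex : ∃ i, 1 ≤ i ∧ i ≤ s - 1 ∧ 1 < h i := by
      by_contra hc
      push_neg at hc
      have hone : ∀ j ∈ Finset.range s, h j = 1 := by
        intro j hj
        rcases Nat.eq_zero_or_pos j with rfl | hj1
        · exact h0
        · have := hc j hj1 (by have := Finset.mem_range.mp hj; omega)
          have := (hpos j).mpr (Finset.mem_range.mp hj)
          omega
      have : mult h s = s := by
        unfold mult; rw [Finset.sum_congr rfl hone]; simp
      omega
    obtain ⟨i0, hi1, hi2, hi3⟩ := hex
    set k := Nat.findGreatest (fun j => 1 < h j) (s - 1) with hkdef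
    have hkP : 1 < h k := Nat.findGreatest_spec (P := fun j => 1 < h j) hi2 hi3
    have hk2 : k ≤ s - 1 := Nat.findGreatest_le _
    have hk1 : 1 ≤ k := by
      rcases Nat.eq_zero_or_pos k with hk0 | hk0
      · rw [hk0, h0] at hkP; omega
      · exact hk0
    have hkmax : ∀ i, 1 ≤ i → i ≤ s - 1 → 1 < h i → i ≤ k :=
      fun i _ hi2' hi3' => Nat.le_findGreatest hi2' hi3'
    have hO' : IsOSeq (subE h k) s := key_subE h s k hO hk1 hk2 hkP hkmax
    have hm' : mult (subE h k) s = d - 1 := by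
      have := mult_subE h s k (by omega) (by omega)
      omega
    obtain ⟨c', hc0, hcd, hcO, hcstep⟩ := IH (d - 1) (by omega) (subE h k) s hO' hm'
    have htopf : stepc c' h (d - s) (d - s) = h := by funext j; simp [stepc]
    have hgen : ∀ m', m' ≠ d - s → ∀ j, stepc c' h (d - s) m' j = c' m' j := by
      intro m' hm' j; simp [stepc, hm']
    refine ⟨stepc c' h (d - s), ?_, htopf, ?_, ?_⟩
    · intro j
      rw [hgen 0 (by omega) j]
      exact hc0 j
    · intro m hm
      rcases eq_or_ne m (d - s) with rfl | hne
      · rw [htopf]; exact hO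
      · have hfun : stepc c' h (d - s) m = c' m := funext fun j => hgen m hne j
        rw [hfun]; exact hcO m (by omega)
    · intro m hm
      rcases eq_or_ne (m + 1) (d - s) with heq | hne
      · have hcm : c' m = subE h k := by rw [show m = (d - 1) - s by omega]; exact hcd
        refine ⟨k, ?_, ?_⟩
        · have hsub : subE h k k = h k - 1 := by simp [subE]
          rw [heq, show stepc c' h (d - s) (d - s) k = h k by rw [htopf],
            hgen m (by omega) k, hcm, hsub]
          omega
        · intro j hj
          rw [heq, show stepc c' h (d - s) (d - s) j = h j by rw [htopf],
            hgen m (by omega) j, hcm]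
          simp only [subE, if_neg hj]
      · obtain ⟨i, hi, hj⟩ := hcstep m (by omega)
        exact ⟨i, by rw [hgen (m + 1) hne i, hgen m (by omega) i]; exact hi,
          fun j hji => by rw [hgen (m + 1) hne j, hgen m (by omega) j]; exact hj j hji⟩

/-- If `h` is a finite O-sequence of length `s` different from `(1^s)` and
`k = max{1 ≤ i ≤ s-1 : h_i > 1}`, then `h - e_k` is a finite O-sequence of length `s` and
multiplicity `e(h) - 1`. Consequently, every finite O-sequence of length `s` and multiplicity
`d` is obtained from `(1^s)` by `d - s` steps, each increasing a single entry by `1`, all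
intermediate sequences being finite O-sequences of length `s`. -/
theorem stmt1 (h : ℕ → ℕ) (s d k : ℕ) (hO : IsOSeq h s) (he : mult h s = d)
    (hk1 : 1 ≤ k) (hk2 : k ≤ s - 1) (hk3 : 1 < h k)
    (hkmax : ∀ i, 1 ≤ i → i ≤ s - 1 → 1 < h i → i ≤ k) :
    (IsOSeq (subE h k) s ∧ mult (subE h k) s = d - 1) ∧
    (∀ h' : ℕ → ℕ, IsOSeq h' s → mult h' s = d →
      ∃ c : ℕ → ℕ → ℕ,
        (∀ j, c 0 j = if j < s then 1 else 0) ∧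
        c (d - s) = h' ∧
        (∀ m, m ≤ d - s → IsOSeq (c m) s) ∧
        (∀ m, m < d - s → ∃ i, c (m + 1) i = c m i + 1 ∧ ∀ j, j ≠ i → c (m + 1) j = c m j)) := by
  have hs1 : 0 < s := (hO.2.1 0).mp (by rw [hO.1]; omega)
  refine ⟨⟨key_subE h s k hO hk1 hk2 hk3 hkmax, ?_⟩, ?_⟩
  · have := mult_subE h s k (by omega) (by omega)
    omega
  · intro h' hO' he'
    exact chain d h' s hO' he'
end

section
/- Let h = (1, h_1, …, h_{s-1}) be a finite O-sequence of multiplicity d with h ≠ (1, d-1). Then the sequence h' = h - e_{s-1} + e_1, obtained by decreasing the last entry of h by 1 (deleting it if it equals 1) and increasing h_1 by 1, is a finite O-sequence of multiplicity d. Moreover, iterating this operation starting from any finite O-sequence of multiplicity d reaches the O-sequence (1, d-1) after finitely many steps. -/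
lemma mac_one (a : ℕ) : mac 1 a = (a + 1).choose 2 := by
  rcases Nat.eq_zero_or_pos a with rfl | ha
  · simp [mac]
  · have hK : Nat.findGreatest (fun n => Nat.choose n 1 ≤ a) (a + 0 + 1) = a := by
      rw [Nat.findGreatest_eq_iff]
      refine ⟨by omega, fun _ => by simp, fun n hn _ => ?_⟩
      simp only [Nat.choose_one_right]
      omega
    show mac (0 + 1) a = _
    rw [mac]
    simp only [hK, if_neg ha.ne']
    simp [mac, Nat.choose_one_right]

lemma eq_twoSeq_of_lt_three (h : ℕ → ℕ) (s d : ℕ) (h0 : h 0 = 1)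
    (hpos : ∀ i, 0 < h i ↔ i < s) (he : mult h s = d) (hsu : s < 3) (hs0 : 0 < s) :
    h = twoSeq d := by
  have hz : ∀ i, s ≤ i → h i = 0 := fun i hi => by have := hpos i; omega
  funext j
  unfold twoSeq
  interval_cases s
  · rw [mult, Finset.sum_range_one, h0] at he
    match j with
    | 0 => simpa using h0
    | 1 => have := hz 1 (by omega); simp only [if_neg one_ne_zero, if_pos rfl, if_true]; omega
    | (n+2) => simp [hz (n+2) (by omega)]
  · rw [mult, Finset.sum_range_succ, Finset.sum_range_one, h0] at he
    match j with
    | 0 => simpa using h0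
    | 1 => simp only [if_neg one_ne_zero, if_pos rfl, if_true]; omega
    | (n+2) => simp [hz (n+2) (by omega)]

lemma three_le (h : ℕ → ℕ) (s d : ℕ) (hO : IsOSeq h s) (he : mult h s = d)
    (hne : h ≠ twoSeq d) : 3 ≤ s := by
  obtain ⟨h0, hpos, _⟩ := hO
  by_contra hsu
  push_neg at hsu
  have hs0 : 0 < s := by have := hpos 0; omega
  exact hne (eq_twoSeq_of_lt_three h s d h0 hpos he hsu hs0)

lemma sum_split (f : ℕ → ℕ) (s : ℕ) (hs : 3 ≤ s) :
    ∑ i ∈ ((Finset.range s).erase 1).erase (s-1), f i + f (s-1) + f 1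
      = ∑ i ∈ Finset.range s, f i := by
  have hm1 : s - 1 ∈ (Finset.range s).erase 1 := by
    simp only [Finset.mem_erase, Finset.mem_range]; omega
  have hm2 : (1 : ℕ) ∈ Finset.range s := by
    simp only [Finset.mem_range]; omega
  rw [Finset.sum_erase_add _ _ hm1, Finset.sum_erase_add _ _ hm2]

lemma step_main (h : ℕ → ℕ) (s d : ℕ) (hO : IsOSeq h s) (he : mult h s = d)
    (hs : 3 ≤ s) :
    IsOSeq (downUp h s) (if h (s - 1) = 1 then s - 1 else s) ∧
    mult (downUp h s) (if h (s - 1) = 1 then s - 1 else s) = d ∧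
    genus (downUp h s) (if h (s - 1) = 1 then s - 1 else s) + (s - 2) = genus h s := by
  obtain ⟨h0, hpos, hmac⟩ := hO
  have hs1 : 0 < h (s-1) := (hpos (s-1)).2 (by omega)
  set h' := downUp h s with hh'
  have hval : ∀ j, j ≠ 1 → j ≠ s-1 → h' j = h j := by
    intro j hj1 hjs
    simp only [hh', downUp, if_neg hjs, if_neg hj1]
  have hval1 : h' 1 = h 1 + 1 := by
    simp only [hh', downUp, if_neg (by omega : ¬(1:ℕ) = s - 1), if_pos rfl, if_true]
  have hvals : h' (s-1) = h (s-1) - 1 := by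
    simp only [hh', downUp, if_pos rfl, if_true]
  have hd0 : h' 0 = 1 := by
    rw [hval 0 (by omega) (by omega)]; exact h0
  have hpos' : ∀ i, 0 < h' i ↔ i < (if h (s-1) = 1 then s-1 else s) := by
    intro i
    by_cases hi1 : i = 1
    · subst hi1
      rw [hval1]
      split_ifs <;> omega
    by_cases his : i = s-1
    · subst his
      rw [hvals]
      split_ifs with hc <;> omega
    · rw [hval i hi1 his]
      have := hpos i
      split_ifs <;> omega
  have hmac' : ∀ t, 1 ≤ t → h' (t+1) ≤ mac t (h' t) := by
    intro t ht
    rcases lt_or_ge t (s-1) with hts | hts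
    · have ht1 : h' (t+1) ≤ h (t+1) := by
        simp only [hh', downUp]
        split_ifs <;> omega
      rcases eq_or_ne t 1 with rfl | ht1'
      · rw [hval1, mac_one]
        refine le_trans ht1 (le_trans (hmac 1 le_rfl) ?_)
        rw [mac_one]
        exact Nat.choose_le_choose 2 (by omega)
      · rw [hval t ht1' (by omega)]
        exact le_trans ht1 (hmac t ht)
    · have hz : h' (t+1) = 0 := by
        rw [hval (t+1) (by omega) (by omega)]
        have := hpos (t+1); omega
      simp [hz]
  have hOS : IsOSeq h' (if h (s-1) = 1 then s-1 else s) := ⟨hd0, hpos', hmac'⟩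
  -- sums over the full range s
  have hcong : ∑ i ∈ ((Finset.range s).erase 1).erase (s-1), h' i
      = ∑ i ∈ ((Finset.range s).erase 1).erase (s-1), h i := by
    refine Finset.sum_congr rfl fun i hi => ?_
    simp only [Finset.mem_erase] at hi
    exact hval i hi.2.1 hi.1
  have hcongG : ∑ i ∈ ((Finset.range s).erase 1).erase (s-1), (i-1) * h' i
      = ∑ i ∈ ((Finset.range s).erase 1).erase (s-1), (i-1) * h i := by
    refine Finset.sum_congr rfl fun i hi => ?_
    simp only [Finset.mem_erase] at hi
    rw [hval i hi.2.1 hi.1]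
  have e1 : ∑ i ∈ ((Finset.range s).erase 1).erase (s-1), h i + h (s-1) + h 1
      = mult h s := sum_split h s hs
  have e2 : ∑ i ∈ ((Finset.range s).erase 1).erase (s-1), h i + h' (s-1) + h' 1
      = mult h' s := by rw [← hcong]; exact sum_split h' s hs
  have hmult : mult h' s = d := by
    rw [← e2, hvals, hval1]
    omega
  have g1 : ∑ i ∈ ((Finset.range s).erase 1).erase (s-1), (i-1) * h i
      + (s-1-1) * h (s-1) + (1-1) * h 1 = genus h s := sum_split (fun i => (i-1) * h i) s hs
  have g2 : ∑ i ∈ ((Finset.range s).erase 1).erase (s-1), (i-1) * h i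
      + (s-1-1) * h' (s-1) + (1-1) * h' 1 = genus h' s := by
    rw [← hcongG]; exact sum_split (fun i => (i-1) * h' i) s hs
  have hgen : genus h' s + (s - 2) = genus h s := by
    rw [← g1, ← g2, hvals]
    obtain ⟨x, hx⟩ : ∃ x, h (s-1) = x + 1 := ⟨h (s-1) - 1, by omega⟩
    rw [hx]
    simp only [Nat.add_sub_cancel, Nat.mul_succ]
    have : s - 1 - 1 = s - 2 := by omega
    rw [this]
    ring
  refine ⟨hOS, ?_, ?_⟩ <;> split_ifs with hc
  · have hss : s = (s-1) + 1 := by omega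
    have : mult h' ((s-1)+1) = d := by rw [← hss]; exact hmult
    rw [mult, Finset.sum_range_succ] at this
    rw [hvals, hc] at this
    simpa [mult] using this
  · exact hmult
  · have hss : s = (s-1) + 1 := by omega
    have hg2 : genus h' ((s-1)+1) + (s-2) = genus h s := by rw [← hss]; exact hgen
    rw [genus, Finset.sum_range_succ] at hg2
    rw [hvals, hc] at hg2
    simpa [genus] using hg2
  · exact hgen

lemma reach (d : ℕ) : ∀ g k σ₀, genus k σ₀ ≤ g → IsOSeq k σ₀ → mult k σ₀ = d →
    ∃ (N : ℕ) (c : ℕ → ℕ → ℕ) (σ : ℕ → ℕ),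
      c 0 = k ∧ σ 0 = σ₀ ∧ c N = twoSeq d ∧
      (∀ m, m < N → IsOSeq (c m) (σ m) ∧ c m ≠ twoSeq d ∧
        c (m + 1) = downUp (c m) (σ m) ∧
        σ (m + 1) = if c m (σ m - 1) = 1 then σ m - 1 else σ m) := by
  intro g
  induction g using Nat.strong_induction_on with
  | _ g IH =>
    intro k σ₀ hg hOk hmk
    by_cases hk : k = twoSeq d
    · exact ⟨0, fun _ => k, fun _ => σ₀, rfl, rfl, hk, fun m hm => absurd hm (by omega)⟩
    · have hs3 := three_le k σ₀ d hOk hmk hk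
      obtain ⟨hO', hm', hg'⟩ := step_main k σ₀ d hOk hmk hs3
      set σ₁ := if k (σ₀ - 1) = 1 then σ₀ - 1 else σ₀ with hσ₁
      have hlt : genus (downUp k σ₀) σ₁ < g := by omega
      obtain ⟨N, c, σ, hc0, hσ0, hcN, hstep⟩ :=
        IH (genus (downUp k σ₀) σ₁) hlt (downUp k σ₀) σ₁ le_rfl hO' hm'
      refine ⟨N + 1, fun m => if m = 0 then k else c (m - 1),
        fun m => if m = 0 then σ₀ else σ (m - 1), by simp, by simp, by simp [hcN], ?_⟩
      intro m hm
      match m with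
      | 0 =>
        refine ⟨by simpa using hOk, by simpa using hk, ?_, ?_⟩ <;>
          simp [hc0, hσ0, hσ₁]
      | (n+1) =>
        obtain ⟨a, b, cc, dd⟩ := hstep n (by omega)
        simp only [Nat.succ_ne_zero, if_false, Nat.add_sub_cancel]
        exact ⟨a, b, cc, dd⟩

/-- If `h` is a finite O-sequence of multiplicity `d` with `h ≠ (1, d-1)`,
then `h' = h - e_{s-1} + e_1` (the last entry disappears when it equals `1`) is a finite
O-sequence of multiplicity `d`. Moreover, iterating this operation starting from any finite
O-sequence of multiplicity `d` reaches `(1, d-1)` after finitely many steps. -/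
theorem stmt2 (h : ℕ → ℕ) (s d : ℕ) (hO : IsOSeq h s) (he : mult h s = d)
    (hne : h ≠ twoSeq d) :
    (IsOSeq (downUp h s) (if h (s - 1) = 1 then s - 1 else s) ∧
      mult (downUp h s) (if h (s - 1) = 1 then s - 1 else s) = d) ∧
    (∀ (k : ℕ → ℕ) (σ₀ : ℕ), IsOSeq k σ₀ → mult k σ₀ = d →
      ∃ (N : ℕ) (c : ℕ → ℕ → ℕ) (σ : ℕ → ℕ),
        c 0 = k ∧ σ 0 = σ₀ ∧ c N = twoSeq d ∧
        (∀ m, m < N → IsOSeq (c m) (σ m) ∧ c m ≠ twoSeq d ∧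
          c (m + 1) = downUp (c m) (σ m) ∧
          σ (m + 1) = if c m (σ m - 1) = 1 then σ m - 1 else σ m)) := by
  have hs3 := three_le h s d hO he hne
  obtain ⟨hO', hm', _⟩ := step_main h s d hO he hs3
  exact ⟨⟨hO', hm'⟩, fun k σ₀ hOk hmk => reach d (genus k σ₀) k σ₀ le_rfl hOk hmk⟩
end

section
/- Let d ≥ s ≥ 2 and let h = (1, h_1, …, h_{s-1}) and k = (1, k_1, …, k_{s-1}) be finite O-sequences of multiplicity d and length s such that k < h in the total order < and g(k) > g(h). Then there exists a finite O-sequence h̄ of multiplicity d and length s with h < h̄ and g(h̄) > g(k). -/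
lemma mac_zero (t : ℕ) : mac t 0 = 0 := by cases t <;> simp [mac]

lemma mac_succ_eq (t a : ℕ) :
    mac (t+1) a = if a = 0 then 0 else
      Nat.choose (Nat.findGreatest (fun n => Nat.choose n (t+1) ≤ a) (a + t + 1) + 1) (t+2) +
        mac t (a - Nat.choose (Nat.findGreatest (fun n => Nat.choose n (t+1) ≤ a) (a + t + 1)) (t+1)) := by
  rfl

lemma sub_le_choose (n t : ℕ) : n - t ≤ Nat.choose n (t+1) := by
  induction n with
  | zero => simp
  | succ n ih =>
    rcases le_or_gt t n with h1 | h1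
    · have h2 : 0 < Nat.choose n t := Nat.choose_pos h1
      have h3 : Nat.choose (n+1) (t+1) = Nat.choose n t + Nat.choose n (t+1) :=
        Nat.choose_succ_succ n t
      omega
    · have : n + 1 - t = 0 := by omega
      omega

lemma greedy_facts (t a : ℕ) (ha : 1 ≤ a) :
    t + 1 ≤ Nat.findGreatest (fun n => Nat.choose n (t+1) ≤ a) (a + t + 1) ∧
    Nat.choose (Nat.findGreatest (fun n => Nat.choose n (t+1) ≤ a) (a + t + 1)) (t+1) ≤ a ∧
    a < Nat.choose (Nat.findGreatest (fun n => Nat.choose n (t+1) ≤ a) (a + t + 1) + 1) (t+1) := by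
  set P : ℕ → Prop := fun n => Nat.choose n (t+1) ≤ a with hP
  have hw : P (t+1) := by simp [hP, Nat.choose_self]; omega
  have hwb : t + 1 ≤ a + t + 1 := by omega
  have h1 : t + 1 ≤ Nat.findGreatest P (a + t + 1) := Nat.le_findGreatest hwb hw
  have h2 : P (Nat.findGreatest P (a + t + 1)) := Nat.findGreatest_spec hwb hw
  refine ⟨h1, h2, ?_⟩
  set N := Nat.findGreatest P (a + t + 1) with hN
  rcases le_or_gt (N + 1) (a + t + 1) with hb | hb
  · have := Nat.findGreatest_is_greatest (Nat.lt_succ_self N) hb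
    simpa [hP] using this
  · have hNb : N + 1 = a + t + 2 := by
      have := Nat.findGreatest_le (P := P) (a + t + 1)
      omega
    rw [hNb]
    have h4 := sub_le_choose (a + t + 2) t
    omega

lemma macL : ∀ t m r, r < Nat.choose m t → mac t r < Nat.choose (m+1) (t+1) := by
  intro t
  induction t with
  | zero =>
    intro m r hr
    show mac 0 r < Nat.choose (m+1) 1
    have : mac 0 r = 0 := rfl
    have h2 : 0 < Nat.choose (m+1) 1 := by simp
    omega
  | succ t ih =>
    intro m r hr
    show mac (t+1) r < Nat.choose (m+1) (t+2)
    have hmt : t + 1 ≤ m := by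
      by_contra hc
      have : Nat.choose m (t+1) = 0 := Nat.choose_eq_zero_of_lt (by omega)
      omega
    by_cases hr0 : r = 0
    · subst hr0
      have h0 : mac (t+1) 0 = 0 := mac_zero _
      have : 0 < Nat.choose (m+1) (t+2) := Nat.choose_pos (by omega)
      omega
    · have ha : 1 ≤ r := by omega
      obtain ⟨h1, h2, h3⟩ := greedy_facts t r ha
      set N := Nat.findGreatest (fun n => Nat.choose n (t+1) ≤ r) (r + t + 1) with hN
      have hNm : N < m := by
        by_contra hc
        have := Nat.choose_le_choose (t+1) (show m ≤ N by omega)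
        omega
      have hsplit : Nat.choose (N+1) (t+1) = Nat.choose N t + Nat.choose N (t+1) :=
        Nat.choose_succ_succ N t
      have hr' : r - Nat.choose N (t+1) < Nat.choose N t := by omega
      have ihh := ih N (r - Nat.choose N (t+1)) hr'
      have heq : mac (t+1) r =
          Nat.choose (N + 1) (t+2) + mac t (r - Nat.choose N (t+1)) := by
        rw [mac_succ_eq, if_neg hr0]
      have hs2 : Nat.choose (N+2) (t+2) = Nat.choose (N+1) (t+1) + Nat.choose (N+1) (t+2) :=
        Nat.choose_succ_succ (N+1) (t+1)
      have hle : Nat.choose (N+2) (t+2) ≤ Nat.choose (m+1) (t+2) :=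
        Nat.choose_le_choose _ (by omega)
      omega

lemma mac_mono : ∀ t a b, a ≤ b → mac t a ≤ mac t b := by
  intro t
  induction t with
  | zero => intro a b _; exact le_refl 0
  | succ t ih =>
    have step : ∀ a, mac (t+1) a ≤ mac (t+1) (a+1) := by
      intro a
      by_cases ha0 : a = 0
      · subst ha0
        have : mac (t+1) 0 = 0 := mac_zero _
        omega
      · have ha : 1 ≤ a := by omega
        obtain ⟨h1, h2, h3⟩ := greedy_facts t a ha
        obtain ⟨h1', h2', h3'⟩ := greedy_facts t (a+1) (by omega)
        set N := Nat.findGreatest (fun n => Nat.choose n (t+1) ≤ a) (a + t + 1) with hN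
        set N' := Nat.findGreatest (fun n => Nat.choose n (t+1) ≤ a + 1) ((a+1) + t + 1) with hN'
        have heqa : mac (t+1) a =
            Nat.choose (N + 1) (t+2) + mac t (a - Nat.choose N (t+1)) := by
          rw [mac_succ_eq, if_neg ha0]
        have heqa1 : mac (t+1) (a+1) =
            Nat.choose (N' + 1) (t+2) + mac t ((a+1) - Nat.choose N' (t+1)) := by
          rw [mac_succ_eq, if_neg (by omega : a + 1 ≠ 0)]
        have hNle : N ≤ a + t + 1 := Nat.findGreatest_le _
        by_cases hc : Nat.choose (N+1) (t+1) ≤ a + 1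
        · -- N' = N + 1 and mac (t+1) (a+1) = choose (N+2) (t+2)
          have hceq : Nat.choose (N+1) (t+1) = a + 1 := by omega
          have hge : N + 1 ≤ N' :=
            Nat.le_findGreatest (by omega) (by simpa using hc)
          have hlt2 : Nat.choose (N+2) (t+1) = Nat.choose (N+1) t + Nat.choose (N+1) (t+1) :=
            Nat.choose_succ_succ (N+1) t
          have hpos : 0 < Nat.choose (N+1) t := Nat.choose_pos (by omega)
          have hle2 : N' ≤ N + 1 := by
            by_contra hcon
            have := Nat.choose_le_choose (t+1) (show N + 2 ≤ N' by omega)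
            omega
          have hNN : N' = N + 1 := by omega
          have hz : (a+1) - Nat.choose N' (t+1) = 0 := by rw [hNN]; omega
          have hsplitN : Nat.choose (N+1) (t+1) = Nat.choose N t + Nat.choose N (t+1) :=
            Nat.choose_succ_succ N t
          have hr' : a - Nat.choose N (t+1) < Nat.choose N t := by omega
          have hL := macL t N (a - Nat.choose N (t+1)) hr'
          have hs2 : Nat.choose (N+2) (t+2) = Nat.choose (N+1) (t+1) + Nat.choose (N+1) (t+2) :=
            Nat.choose_succ_succ (N+1) (t+1)
          rw [heqa, heqa1, hz, mac_zero, hNN]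
          simp only [show N+1+1 = N+2 from rfl]
          omega
        · have hle2 : N' ≤ N := by
            by_contra hcon
            have := Nat.choose_le_choose (t+1) (show N + 1 ≤ N' by omega)
            omega
          have hge : N ≤ N' := Nat.le_findGreatest (by omega) (by simpa using (by omega : Nat.choose N (t+1) ≤ a + 1))
          have hNN : N' = N := by omega
          rw [heqa, heqa1, hNN]
          have := ih (a - Nat.choose N (t+1)) ((a+1) - Nat.choose N (t+1)) (by omega)
          omega
    intro a b hab
    induction hab with
    | refl => exact le_refl _
    | step _ ih2 => exact le_trans ih2 (step _)

lemma abel_aux (f : ℕ → ℤ) (s : ℕ) :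
    ∀ n a, 1 ≤ a → s ≤ a + n →
      ∑ j ∈ Finset.Ico a s, ((j - 1 : ℕ) : ℤ) * f j
        = ((a - 1 : ℕ) : ℤ) * (∑ i ∈ Finset.Ico a s, f i)
          + ∑ j ∈ Finset.Ico (a+1) s, (∑ i ∈ Finset.Ico j s, f i) := by
  intro n
  induction n with
  | zero =>
    intro a ha hs
    rw [Finset.Ico_eq_empty (by omega : ¬ a < s),
        Finset.Ico_eq_empty (by omega : ¬ a + 1 < s)]
    simp
  | succ n ihn =>
    intro a ha hs
    rcases le_or_gt s (a + n) with hs' | hs'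
    · exact ihn a ha hs'
    · have has : a < s := by omega
      have hc : ((a - 1 : ℕ) : ℤ) + 1 = (a : ℤ) := by omega
      rw [Finset.sum_eq_sum_Ico_succ_bot has (fun j => ((j - 1 : ℕ) : ℤ) * f j),
          Finset.sum_eq_sum_Ico_succ_bot has f]
      rcases lt_or_ge (a+1) s with has1 | has1
      · rw [ihn (a+1) (by omega) (by omega),
            Finset.sum_eq_sum_Ico_succ_bot has1 (fun j => ∑ i ∈ Finset.Ico j s, f i),
            Finset.sum_eq_sum_Ico_succ_bot has1 f]
        simp only [Nat.add_sub_cancel]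
        linear_combination (-(∑ i ∈ Finset.Ico (a + 1 + 1) s, f i) - f (a+1)) * hc
      · have he : Finset.Ico (a+1) s = ∅ := Finset.Ico_eq_empty (by omega)
        rw [he]
        simp

/-- Let `d ≥ s ≥ 2` and let `h`, `k` be finite O-sequences of multiplicity
`d` and length `s` with `k < h` in the total order and `g(k) > g(h)`. Then there is a finite
O-sequence `h̄` of multiplicity `d` and length `s` with `h < h̄` and `g(h̄) > g(k)`. -/
theorem stmt6 (d s : ℕ) (h k : ℕ → ℕ) (hs : 2 ≤ s) (hsd : s ≤ d)
    (hOh : IsOSeq h s) (hOk : IsOSeq k s)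
    (heh : mult h s = d) (hek : mult k s = d)
    (hlt : oLT k h) (hg : genus h s < genus k s) :
    ∃ hb : ℕ → ℕ, IsOSeq hb s ∧ mult hb s = d ∧ oLT h hb ∧ genus k s < genus hb s := by
  obtain ⟨h0h, hposh, hmach⟩ := hOh
  obtain ⟨h0k, hposk, hmack⟩ := hOk
  obtain ⟨l, hkl, hag⟩ := hlt
  have hls : l < s := (hposh l).1 (lt_of_le_of_lt (Nat.zero_le _) hkl)
  set f : ℕ → ℤ := fun i => (h i : ℤ) - k i with hf
  set F : ℕ → ℤ := fun a => ∑ i ∈ Finset.Ico a s, f i with hF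
  -- basic facts about F
  have hFzero : ∀ a, l < a → F a = 0 := by
    intro a ha
    refine Finset.sum_eq_zero fun i hi => ?_
    have heq := hag i (lt_of_lt_of_le ha (Finset.mem_Ico.1 hi).1)
    simp [hf, heq]
  have hFl : 1 ≤ F l := by
    have hsplit : F l = f l + ∑ i ∈ Finset.Ico (l+1) s, f i :=
      Finset.sum_eq_sum_Ico_succ_bot hls f
    have h2 : ∑ i ∈ Finset.Ico (l+1) s, f i = F (l+1) := rfl
    have h3 : F (l+1) = 0 := hFzero (l+1) (by omega)
    have h4 : 1 ≤ f l := by simp [hf]; omega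
    omega
  -- genus difference identity
  have hcastg : ∀ x : ℕ → ℕ, (genus x s : ℤ) = ∑ j ∈ Finset.Ico 0 s, ((j - 1 : ℕ) : ℤ) * x j := by
    intro x
    rw [genus, ← Finset.range_eq_Ico]
    push_cast
    rfl
  have hgd : (genus h s : ℤ) - genus k s = ∑ j ∈ Finset.Ico 2 s, F j := by
    have e1 : (genus h s : ℤ) - genus k s = ∑ j ∈ Finset.Ico 0 s, ((j - 1 : ℕ) : ℤ) * f j := by
      rw [hcastg h, hcastg k, ← Finset.sum_sub_distrib]
      refine Finset.sum_congr rfl fun j _ => ?_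
      simp [hf]; ring
    have e2 : ∑ j ∈ Finset.Ico 0 s, ((j - 1 : ℕ) : ℤ) * f j
        = ∑ j ∈ Finset.Ico 1 s, ((j - 1 : ℕ) : ℤ) * f j := by
      rw [Finset.sum_eq_sum_Ico_succ_bot (by omega : 0 < s) (fun j => ((j - 1 : ℕ) : ℤ) * f j)]
      simp
    have e3 := abel_aux f s s 1 (le_refl 1) (by omega)
    simp only [Nat.sub_self, Nat.cast_zero, zero_mul, zero_add] at e3
    rw [e1, e2, e3]
  -- find q
  have hneg : ∑ j ∈ Finset.Ico 2 s, F j < 0 := by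
    rw [← hgd]
    have : (genus h s : ℤ) < genus k s := by exact_mod_cast hg
    omega
  have hex : ∃ j₀ ∈ Finset.Ico 2 s, F j₀ < 0 := by
    by_contra hcon
    push_neg at hcon
    have : (0:ℤ) ≤ ∑ j ∈ Finset.Ico 2 s, F j := Finset.sum_nonneg hcon
    omega
  obtain ⟨j₀, hj₀mem, hj₀⟩ := hex
  obtain ⟨hj₀2, hj₀s⟩ := Finset.mem_Ico.1 hj₀mem
  set q := Nat.findGreatest (fun j => F j < 0) s with hq
  have hq2 : 2 ≤ q := by
    rw [hq]
    exact le_trans hj₀2 (Nat.le_findGreatest (le_of_lt hj₀s) hj₀)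
  have hqneg : F q < 0 := by
    rw [hq]
    exact Nat.findGreatest_spec (P := fun j => F j < 0) (le_of_lt hj₀s) hj₀
  have hql : q < l := by
    rcases lt_trichotomy q l with hc | hc | hc
    · exact hc
    · exfalso; rw [hc] at hqneg; omega
    · exfalso; have := hFzero q hc; omega
  have hqs : q < s := lt_trans hql hls
  have hFnn : ∀ j, q < j → j ≤ s → 0 ≤ F j := by
    intro j hj1 hj2
    rw [hq] at hj1
    have h6 := Nat.findGreatest_is_greatest hj1 hj2
    exact not_lt.1 h6
  have hFq1 : 0 ≤ F (q+1) := hFnn (q+1) (by omega) (by omega)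
  have hFqsplit : F q = f q + F (q+1) := Finset.sum_eq_sum_Ico_succ_bot hqs f
  -- the new sequence
  set hb : ℕ → ℕ := fun j => if j < q then k j else if j = q then h q + (-(F q)).toNat else h j with hhb
  have hb_lt : ∀ j, j < q → hb j = k j := fun j hj => by simp [hhb, hj]
  have hb_gtq : ∀ j, q < j → hb j = h j := by
    intro j hj
    simp only [hhb]
    rw [if_neg (by omega), if_neg (by omega)]
  have hbq : (hb q : ℤ) = (h q : ℤ) - F q := by
    simp only [hhb, lt_irrefl, if_neg, if_pos rfl, reduceIte]
    push_cast [Int.toNat_of_nonneg (by omega : (0:ℤ) ≤ -(F q))]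
    ring
  have hbqk : (hb q : ℤ) = (k q : ℤ) - F (q+1) := by
    rw [hbq]
    simp only [hf] at hFqsplit
    omega
  have hbq_le : hb q ≤ k q := by
    have : (hb q : ℤ) ≤ (k q : ℤ) := by omega
    exact_mod_cast this
  have hbq_gt : h q < hb q := by
    have : (h q : ℤ) < (hb q : ℤ) := by omega
    exact_mod_cast this
  refine ⟨hb, ⟨?_, ?_, ?_⟩, ?_, ⟨q, hbq_gt, fun j hj => (hb_gtq j hj).symm⟩, ?_⟩
  · rw [hb_lt 0 (by omega)]; exact h0k
  · intro i
    rcases lt_trichotomy i q with hc | hc | hc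
    · rw [hb_lt i hc]; exact hposk i
    · subst hc
      constructor
      · intro _; exact hqs
      · intro _; omega
    · rw [hb_gtq i hc]; exact hposh i
  · intro t ht
    rcases lt_trichotomy (t+1) q with hc | hc | hc
    · rw [hb_lt (t+1) hc, hb_lt t (by omega)]
      exact hmack t ht
    · rw [hb_lt t (by omega)]
      calc hb (t+1) = hb q := by rw [hc]
        _ ≤ k q := hbq_le
        _ = k (t+1) := by rw [hc]
        _ ≤ mac t (k t) := hmack t ht
    · rw [hb_gtq (t+1) hc]
      rcases Nat.lt_or_ge q t with hc2 | hc2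
      · rw [hb_gtq t hc2]
        exact hmach t ht
      · have htq : t = q := by omega
        refine le_trans (hmach t ht) (mac_mono t (h t) (hb t) ?_)
        rw [htq]
        exact le_of_lt hbq_gt
  · -- multiplicity
    have e0 : ∑ j ∈ Finset.Ico (q+1) s, ((hb j : ℤ) - k j) = F (q+1) := by
      refine Finset.sum_congr rfl fun j hj => ?_
      rw [hb_gtq j (Finset.mem_Ico.1 hj).1]
    have e1 : ∑ j ∈ Finset.Ico q s, ((hb j : ℤ) - k j) = 0 := by
      rw [Finset.sum_eq_sum_Ico_succ_bot hqs (fun j => (hb j : ℤ) - k j), e0]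
      omega
    have e2 : ∑ j ∈ Finset.Ico 0 q, ((hb j : ℤ) - k j) = 0 :=
      Finset.sum_eq_zero fun j hj => by rw [hb_lt j (Finset.mem_Ico.1 hj).2]; ring
    have e3 : (mult hb s : ℤ) = (mult k s : ℤ) := by
      have : (mult hb s : ℤ) - (mult k s : ℤ) = ∑ j ∈ Finset.Ico 0 s, ((hb j : ℤ) - k j) := by
        rw [mult, mult, ← Finset.range_eq_Ico]
        push_cast
        rw [← Finset.sum_sub_distrib]
      rw [← Finset.sum_Ico_consecutive _ (Nat.zero_le q) (le_of_lt hqs), e1, e2] at this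
      omega
    have : mult hb s = mult k s := by exact_mod_cast e3
    omega
  · -- genus
    have e0 : ∑ j ∈ Finset.Ico (q+1) s, ((j - 1 : ℕ) : ℤ) * ((hb j : ℤ) - k j)
        = ∑ j ∈ Finset.Ico (q+1) s, ((j - 1 : ℕ) : ℤ) * f j := by
      refine Finset.sum_congr rfl fun j hj => ?_
      rw [hb_gtq j (Finset.mem_Ico.1 hj).1]
    have habel := abel_aux f s s (q+1) (by omega) (by omega)
    simp only [Nat.add_sub_cancel] at habel
    have e1 : ∑ j ∈ Finset.Ico q s, ((j - 1 : ℕ) : ℤ) * ((hb j : ℤ) - k j)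
        = ((q - 1 : ℕ) : ℤ) * (-(F (q+1))) + ((q : ℕ) : ℤ) * F (q+1)
          + ∑ j ∈ Finset.Ico (q+1+1) s, F j := by
      rw [Finset.sum_eq_sum_Ico_succ_bot hqs (fun j => ((j - 1 : ℕ) : ℤ) * ((hb j : ℤ) - k j)),
          e0, habel]
      have : (hb q : ℤ) - k q = -(F (q+1)) := by omega
      rw [this]
      ring
    have e2 : ∑ j ∈ Finset.Ico 0 q, ((j - 1 : ℕ) : ℤ) * ((hb j : ℤ) - k j) = 0 :=
      Finset.sum_eq_zero fun j hj => by rw [hb_lt j (Finset.mem_Ico.1 hj).2]; ring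
    have e3 : (genus hb s : ℤ) - genus k s = ∑ j ∈ Finset.Ico (q+1) s, F j := by
      have ed : (genus hb s : ℤ) - (genus k s : ℤ)
          = ∑ j ∈ Finset.Ico 0 s, ((j - 1 : ℕ) : ℤ) * ((hb j : ℤ) - k j) := by
        rw [hcastg hb, hcastg k, ← Finset.sum_sub_distrib]
        refine Finset.sum_congr rfl fun j _ => ?_
        ring
      rw [← Finset.sum_Ico_consecutive _ (Nat.zero_le q) (le_of_lt hqs), e1, e2] at ed
      have hcast : ((q - 1 : ℕ) : ℤ) = (q : ℤ) - 1 := by omega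
      rw [ed, hcast, Finset.sum_eq_sum_Ico_succ_bot (show q + 1 < s by omega) F]
      ring
    have e4 : 1 ≤ ∑ j ∈ Finset.Ico (q+1) s, F j := by
      have hmem : l ∈ Finset.Ico (q+1) s := Finset.mem_Ico.2 ⟨by omega, hls⟩
      have h5 := Finset.single_le_sum (f := F)
        (fun j hj => hFnn j (by have := (Finset.mem_Ico.1 hj).1; omega)
          (le_of_lt (Finset.mem_Ico.1 hj).2)) hmem
      omega
    have : (genus k s : ℤ) < genus hb s := by omega
    exact_mod_cast this
end
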